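/- The block space $BH^{p,s}_w$ is complete: for $0<p<\infty$, $0<s\leq\infty$ and any weight $w$, every Cauchy sequence in the quasi-norm $\|\cdot\|_{BH^{p,s}_w}$ converges in $BH^{p,s}_w$. -/

import Mathlib

open MeasureTheory
open scoped ENNReal

noncomputable section

/-- The cube centered at `c` with side length `2*l`. -/
def Cube (n : ℕ) (c : Fin n → ℝ) (l : ℝ) : Set (Fin n → ℝ) := {y | ∀ i, |y i - c i| ≤ l}

/-- `w(E) = ∫_E w`. -/
def wMeas {n : ℕ} (w : (Fin n → ℝ) → ℝ) (E : Set (Fin n → ℝ)) : ℝ := ∫ x in E, w x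

/-- A `(p,s,w)`-block: supported in a cube `Q` with `‖h‖_{L^s} ≤ |Q|^{1/s} w(Q)^{-1/p}`. -/
def IsBlock {n : ℕ} (p : ℝ) (s : ℝ≥0∞) (w : (Fin n → ℝ) → ℝ)
    (h : (Fin n → ℝ) → ℝ) : Prop :=
  AEMeasurable h volume ∧
  ∃ (c : Fin n → ℝ) (l : ℝ), 0 < l ∧ Function.support h ⊆ Cube n c l ∧
    eLpNorm h s volume ≤ (volume (Cube n c l)) ^ (1/s).toReal *
      (ENNReal.ofReal (wMeas w (Cube n c l))) ^ (-(1/p))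

/-- A block decomposition of `f` with coefficients `lam` and blocks `h`. -/
def BHdecomp {n : ℕ} (p : ℝ) (s : ℝ≥0∞) (w : (Fin n → ℝ) → ℝ)
    (f : (Fin n → ℝ) → ℝ) (lam : ℕ → ℝ) (h : ℕ → (Fin n → ℝ) → ℝ) : Prop :=
  (∀ k, IsBlock p s w (h k)) ∧ Summable (fun k => |lam k| ^ min p 1) ∧
    ∀ᵐ x ∂volume, HasSum (fun k => lam k * h k x) (f x)

/-- Membership in the block space `BH^{p,s}_w`. -/
def MemBH {n : ℕ} (p : ℝ) (s : ℝ≥0∞) (w : (Fin n → ℝ) → ℝ)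
    (f : (Fin n → ℝ) → ℝ) : Prop :=
  ∃ lam h, BHdecomp p s w f lam h

/-- The quasi-norm of the block space `BH^{p,s}_w`. -/
def BHnorm {n : ℕ} (p : ℝ) (s : ℝ≥0∞) (w : (Fin n → ℝ) → ℝ)
    (f : (Fin n → ℝ) → ℝ) : ℝ :=
  sInf { t | ∃ lam h, BHdecomp p s w f lam h ∧
    t = (∑' k, |lam k| ^ min p 1) ^ (1 / min p 1) }

namespace BHaux

open scoped NNReal

variable {n : ℕ} {p : ℝ} {s : ℝ≥0∞} {w : (Fin n → ℝ) → ℝ}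

lemma q_pos (hp : 0 < p) : 0 < min p 1 := lt_min hp one_pos

lemma isBlock_dominated {h b : (Fin n → ℝ) → ℝ} (hb : IsBlock p s w h)
    (hmeas : AEMeasurable b volume) (hle : ∀ x, |b x| ≤ |h x|) : IsBlock p s w b := by
  obtain ⟨hm, c, l, hl, hsupp, hnorm⟩ := hb
  refine ⟨hmeas, c, l, hl, ?_,
    le_trans (eLpNorm_mono (by simpa [Real.norm_eq_abs] using hle)) hnorm⟩
  intro x hx
  apply hsupp
  simp only [Function.mem_support] at hx ⊢
  intro h0
  apply hx
  have := hle x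
  rw [h0, abs_zero] at this
  exact abs_eq_zero.1 (le_antisymm this (abs_nonneg _))

lemma isBlock_indicator {h : (Fin n → ℝ) → ℝ} (hb : IsBlock p s w h)
    {E : Set (Fin n → ℝ)} (hE : MeasurableSet E) : IsBlock p s w (E.indicator h) := by
  refine isBlock_dominated hb (hb.1.indicator hE) fun x => ?_
  by_cases hx : x ∈ E <;> simp [Set.indicator_apply, hx, abs_nonneg]

lemma bhdecomp_congr {f f' : (Fin n → ℝ) → ℝ} {lam : ℕ → ℝ} {h : ℕ → (Fin n → ℝ) → ℝ}
    (hd : BHdecomp p s w f lam h) (hff : ∀ᵐ x ∂(volume : Measure (Fin n → ℝ)), f' x = f x) :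
    BHdecomp p s w f' lam h :=
  ⟨hd.1, hd.2.1, by filter_upwards [hd.2.2, hff] with x h1 h2; rw [h2]; exact h1⟩

lemma bhdecomp_neg {f : (Fin n → ℝ) → ℝ} {lam : ℕ → ℝ} {h : ℕ → (Fin n → ℝ) → ℝ}
    (hd : BHdecomp p s w f lam h) :
    BHdecomp p s w (fun x => -(f x)) (fun k => -(lam k)) h :=
  ⟨hd.1, by simpa [abs_neg] using hd.2.1,
    by filter_upwards [hd.2.2] with x hx; simpa [neg_mul] using hx.neg⟩


lemma measurableSet_cube (c : Fin n → ℝ) (l : ℝ) : MeasurableSet (Cube n c l) := by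
  have : Cube n c l = ⋂ i, {y : Fin n → ℝ | |y i - c i| ≤ l} := by
    ext y; simp [Cube, Set.mem_iInter]
  rw [this]
  refine MeasurableSet.iInter fun i => ?_
  exact measurableSet_le (((continuous_apply i).measurable.sub measurable_const).abs)
    measurable_const

/-- Replace blocks of a decomposition by measurable blocks. -/
lemma bhdecomp_measurable {f : (Fin n → ℝ) → ℝ} {lam : ℕ → ℝ} {h : ℕ → (Fin n → ℝ) → ℝ}
    (hd : BHdecomp p s w f lam h) :
    ∃ h' : ℕ → (Fin n → ℝ) → ℝ, (∀ i, Measurable (h' i)) ∧ BHdecomp p s w f lam h' := by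
  have hch : ∀ i : ℕ, ∃ b : (Fin n → ℝ) → ℝ, Measurable b ∧ IsBlock p s w b ∧
      b =ᵐ[volume] h i := by
    intro i
    obtain ⟨hm, c, l, hl, hsupp, hnorm⟩ := hd.1 i
    refine ⟨(Cube n c l).indicator (hm.mk _), ?_, ?_, ?_⟩
    · exact hm.measurable_mk.indicator (measurableSet_cube c l)
    · have heq : (Cube n c l).indicator (hm.mk _) =ᵐ[volume] h i := by
        have h1 : (Cube n c l).indicator (hm.mk _) =ᵐ[volume]
            (Cube n c l).indicator (h i) := by
          filter_upwards [hm.ae_eq_mk] with x hx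
          by_cases hc : x ∈ Cube n c l
          · rw [Set.indicator_of_mem hc, Set.indicator_of_mem hc, hx]
          · rw [Set.indicator_of_notMem hc, Set.indicator_of_notMem hc]
        have h2 : (Cube n c l).indicator (h i) = h i :=
          Set.indicator_eq_self.2 hsupp
        rw [h2] at h1; exact h1
      refine ⟨(hm.measurable_mk.indicator (measurableSet_cube c l)).aemeasurable,
        c, l, hl, ?_, ?_⟩
      · exact (Set.support_indicator_subset).trans (by intro x hx; exact hx)
      · rw [eLpNorm_congr_ae heq]; exact hnorm
    · have h1 : (Cube n c l).indicator (hm.mk _) =ᵐ[volume]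
          (Cube n c l).indicator (h i) := by
        filter_upwards [hm.ae_eq_mk] with x hx
        by_cases hc : x ∈ Cube n c l
        · rw [Set.indicator_of_mem hc, Set.indicator_of_mem hc, hx]
        · rw [Set.indicator_of_notMem hc, Set.indicator_of_notMem hc]
      rw [Set.indicator_eq_self.2 hsupp] at h1; exact h1
  choose h' hm' hbl' heq' using hch
  refine ⟨h', hm', hbl', hd.2.1, ?_⟩
  filter_upwards [hd.2.2, MeasureTheory.ae_all_iff.2 heq'] with x hx hx2
  have : (fun k => lam k * h' k x) = fun k => lam k * h k x := by
    funext k; rw [hx2 k]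
  rw [this]; exact hx

/-- Interleaved combination of two decompositions. -/
lemma bhdecomp_add {fA fB : (Fin n → ℝ) → ℝ} {lamA lamB : ℕ → ℝ}
    {hA hB : ℕ → (Fin n → ℝ) → ℝ}
    (h1 : BHdecomp p s w fA lamA hA) (h2 : BHdecomp p s w fB lamB hB) :
    ∃ lam h, BHdecomp p s w (fun x => fA x + fB x) lam h ∧
      ∑' k, |lam k| ^ min p 1
        = (∑' k, |lamA k| ^ min p 1) + (∑' k, |lamB k| ^ min p 1) := by
  classical
  set lam : ℕ → ℝ := fun m => if Even m then lamA (m/2) else lamB (m/2) with hlam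
  set h : ℕ → (Fin n → ℝ) → ℝ := fun m => if Even m then hA (m/2) else hB (m/2) with hh
  have hodd : ∀ k : ℕ, ¬ Even (2*k+1) := by rintro k ⟨r, hr⟩; omega
  have hd2 : ∀ k : ℕ, 2*k/2 = k := fun k => by omega
  have hd2' : ∀ k : ℕ, (2*k+1)/2 = k := fun k => by omega
  have hlamA : ∀ k, lam (2*k) = lamA k := by
    intro k; rw [hlam]; simp only []; rw [if_pos (even_two_mul k), hd2 k]
  have hlamB : ∀ k, lam (2*k+1) = lamB k := by
    intro k; rw [hlam]; simp only []; rw [if_neg (hodd k), hd2' k]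
  have hhA : ∀ k, h (2*k) = hA k := by
    intro k; rw [hh]; simp only []; rw [if_pos (even_two_mul k), hd2 k]
  have hhB : ∀ k, h (2*k+1) = hB k := by
    intro k; rw [hh]; simp only []; rw [if_neg (hodd k), hd2' k]
  have hsA : (fun k : ℕ => |lam (2*k)| ^ min p 1) = fun k => |lamA k| ^ min p 1 :=
    funext fun k => by rw [hlamA k]
  have hsB : (fun k : ℕ => |lam (2*k+1)| ^ min p 1) = fun k => |lamB k| ^ min p 1 :=
    funext fun k => by rw [hlamB k]
  refine ⟨lam, h, ⟨?_, ?_, ?_⟩, ?_⟩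
  · intro m
    by_cases hm : Even m
    · rw [hh]; simp only []; rw [if_pos hm]; exact h1.1 _
    · rw [hh]; simp only []; rw [if_neg hm]; exact h2.1 _
  · exact Summable.even_add_odd (hsA ▸ h1.2.1) (hsB ▸ h2.2.1)
  · filter_upwards [h1.2.2, h2.2.2] with x hx1 hx2
    apply HasSum.even_add_odd
    · have : (fun k : ℕ => lam (2*k) * h (2*k) x) = fun k => lamA k * hA k x :=
        funext fun k => by rw [hlamA k, hhA k]
      rw [this]; exact hx1
    · have : (fun k : ℕ => lam (2*k+1) * h (2*k+1) x) = fun k => lamB k * hB k x :=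
        funext fun k => by rw [hlamB k, hhB k]
      rw [this]; exact hx2
  · rw [← tsum_even_add_odd (hsA ▸ h1.2.1) (hsB ▸ h2.2.1), hsA, hsB]


lemma bhnorm_set_nonneg {f : (Fin n → ℝ) → ℝ} {t : ℝ}
    (ht : t ∈ { t | ∃ lam h, BHdecomp p s w f lam h ∧
      t = (∑' k, |lam k| ^ min p 1) ^ (1 / min p 1) }) : 0 ≤ t := by
  obtain ⟨lam, h, _, rfl⟩ := ht
  exact Real.rpow_nonneg
    (tsum_nonneg fun k => Real.rpow_nonneg (abs_nonneg _) _) _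

lemma bhnorm_nonneg (f : (Fin n → ℝ) → ℝ) : 0 ≤ BHnorm p s w f := by
  unfold BHnorm
  rcases Set.eq_empty_or_nonempty { t | ∃ lam h, BHdecomp p s w f lam h ∧
      t = (∑' k, |lam k| ^ min p 1) ^ (1 / min p 1) } with he | he
  · rw [he]; simp [Real.sInf_empty]
  · exact le_csInf he fun t ht => bhnorm_set_nonneg ht

lemma bhnorm_le {f : (Fin n → ℝ) → ℝ} {lam : ℕ → ℝ} {h : ℕ → (Fin n → ℝ) → ℝ}
    (hd : BHdecomp p s w f lam h) :
    BHnorm p s w f ≤ (∑' k, |lam k| ^ min p 1) ^ (1 / min p 1) := by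
  apply csInf_le
  · exact ⟨0, fun t ht => bhnorm_set_nonneg ht⟩
  · exact ⟨lam, h, hd, rfl⟩

lemma bhnorm_le_of_le (hp : 0 < p) {f : (Fin n → ℝ) → ℝ} {lam : ℕ → ℝ}
    {h : ℕ → (Fin n → ℝ) → ℝ} {ε : ℝ}
    (hd : BHdecomp p s w f lam h) (hε : 0 ≤ ε)
    (hle : ∑' k, |lam k| ^ min p 1 ≤ ε ^ min p 1) :
    BHnorm p s w f ≤ ε := by
  refine (bhnorm_le hd).trans ?_
  have h1 : (∑' k, |lam k| ^ min p 1) ^ (1 / min p 1)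
      ≤ (ε ^ min p 1) ^ (1 / min p 1) :=
    Real.rpow_le_rpow (tsum_nonneg fun k => Real.rpow_nonneg (abs_nonneg _) _) hle
      (by positivity)
  refine h1.trans_eq ?_
  rw [← Real.rpow_mul hε, mul_one_div_cancel (q_pos hp).ne', Real.rpow_one]

lemma exists_decomp_le (hp : 0 < p) {f : (Fin n → ℝ) → ℝ} {ε : ℝ}
    (hmem : MemBH p s w f) (hle : BHnorm p s w f ≤ ε) (hε : 0 < ε) :
    ∃ lam h, BHdecomp p s w f lam h ∧
      ∑' k, |lam k| ^ min p 1 ≤ (2*ε) ^ min p 1 := by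
  obtain ⟨lam0, h0, hd0⟩ := hmem
  have hne : { t | ∃ lam h, BHdecomp p s w f lam h ∧
      t = (∑' k, |lam k| ^ min p 1) ^ (1 / min p 1) }.Nonempty :=
    ⟨_, lam0, h0, hd0, rfl⟩
  have hbdd : BddBelow { t | ∃ lam h, BHdecomp p s w f lam h ∧
      t = (∑' k, |lam k| ^ min p 1) ^ (1 / min p 1) } :=
    ⟨0, fun t ht => bhnorm_set_nonneg ht⟩
  have hlt : BHnorm p s w f < 2*ε := lt_of_le_of_lt hle (by linarith)
  obtain ⟨t, htS, htlt⟩ := (csInf_lt_iff hbdd hne).1 hlt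
  obtain ⟨lam, h, hd, rfl⟩ := htS
  refine ⟨lam, h, hd, ?_⟩
  have h0' : (0:ℝ) ≤ ∑' k, |lam k| ^ min p 1 :=
    tsum_nonneg fun k => Real.rpow_nonneg (abs_nonneg _) _
  have heq : ((∑' k, |lam k| ^ min p 1) ^ (1 / min p 1)) ^ min p 1
      = ∑' k, |lam k| ^ min p 1 := by
    rw [← Real.rpow_mul h0', one_div_mul_cancel (q_pos hp).ne', Real.rpow_one]
  calc ∑' k, |lam k| ^ min p 1
      = ((∑' k, |lam k| ^ min p 1) ^ (1 / min p 1)) ^ min p 1 := heq.symm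
    _ ≤ (2*ε) ^ min p 1 :=
        Real.rpow_le_rpow (Real.rpow_nonneg h0' _) htlt.le (q_pos hp).le

/-- A decomposition of a difference of two `MemBH` functions. -/
lemma memBH_sub {fA fB : (Fin n → ℝ) → ℝ} (hA : MemBH p s w fA) (hB : MemBH p s w fB) :
    MemBH p s w (fun x => fA x - fB x) := by
  obtain ⟨lamA, hA', hdA⟩ := hA
  obtain ⟨lamB, hB', hdB⟩ := hB
  obtain ⟨lam, h, hd, _⟩ := bhdecomp_add hdA (bhdecomp_neg hdB)
  refine ⟨lam, h, ?_⟩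
  have : (fun x => fA x + -(fB x)) = fun x => fA x - fB x := by
    funext x; ring
  rwa [this] at hd


section clamp

/-- Clamp `g` to the interval `[-b, b]`. -/
def clamp (g b : ℝ) : ℝ := max (-b) (min b g)

lemma clamp_abs_le {g b : ℝ} (hb : 0 ≤ b) : |clamp g b| ≤ b := by
  rw [abs_le]
  constructor
  · exact le_max_left _ _
  · exact max_le (by linarith) (min_le_left _ _)

lemma clamp_zero {b : ℝ} (hb : 0 ≤ b) : clamp 0 b = 0 := by
  unfold clamp
  rw [min_eq_right hb, max_eq_right (by linarith)]

lemma clamp_b_zero (g : ℝ) : clamp g 0 = 0 := by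
  unfold clamp
  rw [neg_zero]
  exact max_eq_left (min_le_left _ _)

lemma clamp_measurable {α : Type*} [MeasurableSpace α] {g b : α → ℝ}
    (hg : Measurable g) (hb : Measurable b) :
    Measurable (fun x => clamp (g x) (b x)) :=
  (hb.neg).max (hb.min hg)

lemma clamp_gap {g b : ℝ} (hb : 0 ≤ b) : |g - clamp g b| = max (|g| - b) 0 := by
  unfold clamp
  rcases le_total g 0 with hg | hg
  · rcases le_total (-b) g with h1 | h1
    · rw [min_eq_right (hg.trans hb), max_eq_right h1, sub_self, abs_zero,
        max_eq_right (by rw [abs_of_nonpos hg]; linarith)]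
    · rw [min_eq_right (hg.trans hb), max_eq_left h1,
        abs_of_nonpos (by linarith), abs_of_nonpos hg,
        max_eq_left (by linarith)]
      ring
  · rcases le_total g b with h1 | h1
    · rw [min_eq_right h1, max_eq_right (by linarith), sub_self, abs_zero,
        max_eq_right (by rw [abs_of_nonneg hg]; linarith)]
    · rw [min_eq_left h1, max_eq_right (by linarith),
        abs_of_nonneg (by linarith), abs_of_nonneg hg,
        max_eq_left (by linarith)]

private lemma max_sub_max {A S b : ℝ} (hb : 0 ≤ b) :
    max (max (A - S) 0 - b) 0 = max (A - (S + b)) 0 := by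
  rcases le_total (A - S) 0 with h | h
  · rw [max_eq_right h, zero_sub, max_eq_right (by linarith),
      max_eq_right (by linarith)]
  · rw [max_eq_left h]
    congr 1
    ring

end clamp


/-- The greedy decomposition of a function supported where the block series
diverges absolutely. -/
lemma greedy {a : ℕ → ℝ} {H : ℕ → (Fin n → ℝ) → ℝ}
    (hbl : ∀ m, IsBlock p s w (H m)) (hHm : ∀ m, Measurable (H m))
    {φ : (Fin n → ℝ) → ℝ} (hφ : Measurable φ)
    (hdiv : ∀ x, φ x ≠ 0 → ¬ Summable (fun m => |a m * H m x|))
    {θ : ℝ} (hθ : 0 < θ) :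
    ∃ B : ℕ → (Fin n → ℝ) → ℝ, (∀ m, IsBlock p s w (B m)) ∧
      ∀ x, HasSum (fun m => (θ * a m) * B m x) (φ x) := by
  classical
  set step : ℕ → (Fin n → ℝ) → ℝ := fun m x => θ * |a m * H m x| with hstep
  have hstep_nonneg : ∀ m x, 0 ≤ step m x := fun m x => by positivity
  set P : ℕ → (Fin n → ℝ) → ℝ := fun m => Nat.rec (motive := fun _ => (Fin n → ℝ) → ℝ)
    (fun _ => 0)
    (fun m Pm x => Pm x + clamp (φ x - Pm x) (step m x)) m with hP
  have hP0 : ∀ x, P 0 x = 0 := fun x => rfl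
  have hPsucc : ∀ m x, P (m+1) x = P m x + clamp (φ x - P m x) (step m x) :=
    fun m x => rfl
  set T : ℕ → (Fin n → ℝ) → ℝ := fun m x => clamp (φ x - P m x) (step m x) with hT
  -- measurability
  have hstepm : ∀ m, Measurable (step m) :=
    fun m => (measurable_const.mul (hHm m)).abs.const_mul θ
  have hPm : ∀ m, Measurable (P m) := by
    intro m
    induction m with
    | zero => exact measurable_const
    | succ m ih =>
      have : P (m+1) = fun x => P m x + clamp (φ x - P m x) (step m x) := rfl
      rw [this]
      exact ih.add (clamp_measurable (hφ.sub ih) (hstepm m))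
  have hTm : ∀ m, Measurable (T m) :=
    fun m => clamp_measurable (hφ.sub (hPm m)) (hstepm m)
  -- partial sum identity
  have hPsum : ∀ M x, P M x = ∑ m ∈ Finset.range M, T m x := by
    intro M x
    induction M with
    | zero => simp [hP0]
    | succ M ih => rw [hPsucc M x, Finset.sum_range_succ, ← ih]
  -- gap formula
  have hgap : ∀ M x, |φ x - P M x|
      = max (|φ x| - ∑ m ∈ Finset.range M, step m x) 0 := by
    intro M x
    induction M with
    | zero =>
      simp only [hP0, sub_zero, Finset.range_zero, Finset.sum_empty]
      rw [max_eq_left (abs_nonneg _)]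
    | succ M ih =>
      have : φ x - P (M+1) x = (φ x - P M x) - clamp (φ x - P M x) (step M x) := by
        rw [hPsucc M x]; ring
      rw [this, clamp_gap (hstep_nonneg M x), ih,
        max_sub_max (hstep_nonneg M x), Finset.sum_range_succ]
  -- define B
  set B : ℕ → (Fin n → ℝ) → ℝ := fun m x => if a m = 0 then 0 else T m x / (θ * a m)
    with hB
  have hTB : ∀ m x, (θ * a m) * B m x = T m x := by
    intro m x
    rw [hB]; simp only []
    by_cases hm : a m = 0
    · rw [if_pos hm, hm]
      have : step m x = 0 := by rw [hstep]; simp [hm]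
      rw [hT]; simp only []
      rw [this, clamp_b_zero]
      ring
    · rw [if_neg hm]
      field_simp
  have hBH : ∀ m x, |B m x| ≤ |H m x| := by
    intro m x
    rw [hB]; simp only []
    by_cases hm : a m = 0
    · rw [if_pos hm]; simp [abs_nonneg]
    · rw [if_neg hm, abs_div]
      rw [div_le_iff₀ (by positivity : (0:ℝ) < |θ * a m|)]
      calc |T m x| ≤ step m x := clamp_abs_le (hstep_nonneg m x)
        _ = |H m x| * |θ * a m| := by
            rw [hstep]; simp only []
            rw [abs_mul, abs_mul, abs_of_pos hθ]
            ring
  refine ⟨B, ?_, ?_⟩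
  · intro m
    refine isBlock_dominated (hbl m) ?_ (hBH m)
    have : Measurable (B m) := by
      rw [hB]
      by_cases hm : a m = 0
      · simp only [if_pos hm]; exact measurable_const
      · simp only [if_neg hm]; exact (hTm m).div_const _
    exact this.aemeasurable
  · intro x
    have key : HasSum (fun m => T m x) (φ x) := by
      by_cases hx : φ x = 0
      · have hz : ∀ m, T m x = 0 := by
          intro m
          have hPx : P m x = φ x := by
            have hS : 0 ≤ ∑ i ∈ Finset.range m, step i x :=
              Finset.sum_nonneg fun i _ => hstep_nonneg i x
            have h0 : |φ x - P m x| = 0 := by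
              rw [hgap m x, hx, abs_zero, zero_sub, max_eq_right (by linarith)]
            have := abs_eq_zero.1 h0
            linarith
          rw [hT]; simp only []
          rw [hPx, hx, sub_self, clamp_zero (hstep_nonneg m x)]
        have : (fun m => T m x) = fun _ => (0:ℝ) := funext hz
        rw [this, hx]
        exact hasSum_zero
      · have hdivx : ¬ Summable (fun m => step m x) := by
          intro hsum
          apply hdiv x hx
          have := hsum.mul_left θ⁻¹
          have heq : (fun m => θ⁻¹ * step m x) = fun m => |a m * H m x| := by
            funext m
            rw [hstep]; simp only []
            field_simp
          rwa [heq] at this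
        have htends : Filter.Tendsto (fun M => ∑ m ∈ Finset.range M, step m x)
            Filter.atTop Filter.atTop :=
          (not_summable_iff_tendsto_nat_atTop_of_nonneg
            (fun m => hstep_nonneg m x)).1 hdivx
        obtain ⟨M0, hM0⟩ := (htends.eventually_ge_atTop (|φ x|)).exists
        have hgapz : ∀ M, M0 ≤ M → P M x = φ x := by
          intro M hM
          have hmono : ∑ m ∈ Finset.range M0, step m x
              ≤ ∑ m ∈ Finset.range M, step m x :=
            Finset.sum_le_sum_of_subset_of_nonneg
              (Finset.range_subset_range.2 hM) (fun i _ _ => hstep_nonneg i x)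
          have h0 : |φ x - P M x| = 0 := by
            rw [hgap M x, max_eq_right (by linarith)]
          have := abs_eq_zero.1 h0
          linarith
        have hz : ∀ m, M0 ≤ m → T m x = 0 := by
          intro m hm
          rw [hT]; simp only []
          rw [hgapz m hm, sub_self, clamp_zero (hstep_nonneg m x)]
        have hfin : ∀ m ∉ Finset.range M0, T m x = 0 := by
          intro m hm
          exact hz m (by simpa using hm)
        have := hasSum_sum_of_ne_finset_zero (s := Finset.range M0)
          (f := fun m => T m x) (L := SummationFilter.unconditional ℕ) hfin
        rwa [← hPsum M0 x, hgapz M0 le_rfl] at this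
    have : (fun m => (θ * a m) * B m x) = fun m => T m x := funext fun m => hTB m x
    rw [this]
    exact key


lemma summable_iff_nntop {ι : Type*} [Countable ι] (F : ι → ℝ) :
    Summable F ↔ (∑' i, (‖F i‖₊ : ℝ≥0∞)) ≠ ⊤ := by
  rw [ENNReal.tsum_coe_ne_top_iff_summable]
  have h2 : (fun i => ((‖F i‖₊ : ℝ≥0) : ℝ)) = fun i => |F i| := by
    funext i; rw [coe_nnnorm, Real.norm_eq_abs]
  constructor
  · intro h
    exact NNReal.summable_coe.1 (by rw [h2]; exact h.abs)
  · intro h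
    have h1 : Summable (fun i => ((‖F i‖₊ : ℝ≥0) : ℝ)) := NNReal.summable_coe.2 h
    rw [h2] at h1
    exact summable_abs_iff.1 h1

lemma tsum_pos_neg {ι : Type*} {u : ι → ℝ} (hu : Summable u) :
    (∑' i, ENNReal.ofReal (u i)).toReal - (∑' i, ENNReal.ofReal (-(u i))).toReal
      = ∑' i, u i := by
  have habs : Summable (fun i => |u i|) := hu.abs
  have hpos : Summable (fun i => max (u i) 0) :=
    Summable.of_nonneg_of_le (fun i => le_max_right _ _)
      (fun i => max_le (le_abs_self _) (abs_nonneg _)) habs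
  have hneg : Summable (fun i => max (-(u i)) 0) :=
    Summable.of_nonneg_of_le (fun i => le_max_right _ _)
      (fun i => max_le (neg_le_abs _) (abs_nonneg _)) habs
  have h1 : ∀ i, ENNReal.ofReal (u i) = ENNReal.ofReal (max (u i) 0) := by
    intro i
    rcases le_total (u i) 0 with h | h
    · rw [ENNReal.ofReal_of_nonpos h, max_eq_right h, ENNReal.ofReal_zero]
    · rw [max_eq_left h]
  have h2 : ∀ i, ENNReal.ofReal (-(u i)) = ENNReal.ofReal (max (-(u i)) 0) := by
    intro i
    rcases le_total (-(u i)) 0 with h | h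
    · rw [ENNReal.ofReal_of_nonpos h, max_eq_right h, ENNReal.ofReal_zero]
    · rw [max_eq_left h]
  rw [tsum_congr h1, tsum_congr h2,
    ← ENNReal.ofReal_tsum_of_nonneg (fun i => le_max_right _ _) hpos,
    ← ENNReal.ofReal_tsum_of_nonneg (fun i => le_max_right _ _) hneg,
    ENNReal.toReal_ofReal (tsum_nonneg fun i => le_max_right _ _),
    ENNReal.toReal_ofReal (tsum_nonneg fun i => le_max_right _ _),
    ← Summable.tsum_sub hpos hneg]
  exact tsum_congr fun i => max_zero_sub_max_neg_zero_eq_self (u i)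

end BHaux

open BHaux

/-- Completeness of the block space `BH^{p,s}_w`: every Cauchy sequence (in the
`BH^{p,s}_w` quasi-norm) converges to an element of `BH^{p,s}_w`. -/
theorem stmt_12 {n : ℕ} (p : ℝ) (s : ℝ≥0∞) (hp : 0 < p) (hs : 0 < s)
    (w : (Fin n → ℝ) → ℝ) (hw : ∀ x, 0 ≤ w x) (hloc : LocallyIntegrable w volume)
    (f : ℕ → (Fin n → ℝ) → ℝ) (hf : ∀ k, MemBH p s w (f k))
    (hCauchy : ∀ ε > 0, ∃ N, ∀ m ≥ N, ∀ k ≥ N,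
      BHnorm p s w (fun x => f m x - f k x) ≤ ε) :
    ∃ g : (Fin n → ℝ) → ℝ, MemBH p s w g ∧
      Filter.Tendsto (fun k => BHnorm p s w (fun x => f k x - g x))
        Filter.atTop (nhds 0) := by
  classical
  have hq : 0 < min p 1 := q_pos hp
  have hq' : min p 1 ≠ 0 := hq.ne'
  -- step A : a rapidly Cauchy subsequence with chosen measurable decompositions
  set ε : ℕ → ℝ := fun J => ((1/4:ℝ)^J) ^ (1 / min p 1) / 2 with hεdef
  have hεpos : ∀ J, 0 < ε J := by
    intro J
    rw [hεdef]
    have : (0:ℝ) < ((1/4:ℝ)^J) ^ (1 / min p 1) :=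
      Real.rpow_pos_of_pos (by positivity) _
    positivity
  have h2ε : ∀ J, (2 * ε J) ^ min p 1 = (1/4:ℝ)^J := by
    intro J
    rw [hεdef]
    have h1 : 2 * (((1/4:ℝ)^J) ^ (1 / min p 1) / 2) = ((1/4:ℝ)^J) ^ (1 / min p 1) := by
      ring
    rw [h1, ← Real.rpow_mul (by positivity), one_div_mul_cancel hq', Real.rpow_one]
  choose N hN using fun J => hCauchy (ε J) (hεpos J)
  set κ : ℕ → ℕ := fun J => Nat.rec (N 0) (fun J κJ => max κJ (N (J+1))) J with hκdef
  have hκs : ∀ J, κ (J+1) = max (κ J) (N (J+1)) := fun _ => rfl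
  have hκN : ∀ J, N J ≤ κ J := by
    intro J
    cases J with
    | zero => exact le_rfl
    | succ J => rw [hκs]; exact le_max_right _ _
  have hκmono : Monotone κ :=
    monotone_nat_of_le_succ (fun J => by rw [hκs]; exact le_max_left _ _)
  have hdiffnorm : ∀ J, ∀ m, κ J ≤ m →
      BHnorm p s w (fun x => f m x - f (κ J) x) ≤ ε J :=
    fun J m hm => hN J m (le_trans (hκN J) hm) (κ J) (hκN J)
  have hstep : ∀ J : ℕ, ∃ (lam : ℕ → ℝ) (h : ℕ → (Fin n → ℝ) → ℝ),
      (∀ i, Measurable (h i)) ∧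
      BHdecomp p s w (fun x => f (κ (J+1)) x - f (κ J) x) lam h ∧
      ∑' i, |lam i| ^ min p 1 ≤ (1/4:ℝ)^J := by
    intro J
    have hmem : MemBH p s w (fun x => f (κ (J+1)) x - f (κ J) x) :=
      memBH_sub (hf _) (hf _)
    have hle : BHnorm p s w (fun x => f (κ (J+1)) x - f (κ J) x) ≤ ε J :=
      hdiffnorm J _ (hκmono (Nat.le_succ J))
    obtain ⟨lam, h, hd, hsum⟩ := exists_decomp_le hp hmem hle (hεpos J)
    obtain ⟨h', hm', hd'⟩ := bhdecomp_measurable hd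
    exact ⟨lam, h', hm', hd', by rwa [h2ε J] at hsum⟩
  choose lamd hd hdm hdd hdsum using hstep
  -- step B : combined family, exceptional set, and candidate limit g
  set e : ℕ × ℕ ≃ ℕ := Denumerable.eqv (ℕ × ℕ) with hedef
  set A : ℕ × ℕ → ℝ := fun q' => lamd q'.1 q'.2 with hAdef
  set HH : ℕ × ℕ → (Fin n → ℝ) → ℝ := fun q' => hd q'.1 q'.2 with hHHdef
  have hgeo : Summable (fun j : ℕ => (1/4:ℝ)^j) :=
    summable_geometric_of_lt_one (by norm_num) (by norm_num)
  have hAsum : Summable (fun q' : ℕ × ℕ => |A q'| ^ min p 1) := by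
    rw [summable_prod_of_nonneg (fun q' => by positivity)]
    exact ⟨fun j => (hdd j).2.1,
      Summable.of_nonneg_of_le (fun j => tsum_nonneg (fun i => by positivity))
        hdsum hgeo⟩
  have hAtot : ∑' q' : ℕ × ℕ, |A q'| ^ min p 1 ≤ 2 := by
    rw [Summable.tsum_prod' hAsum (fun j => (hdd j).2.1)]
    have hb : ∑' (j : ℕ), ∑' (i : ℕ), |A (j, i)| ^ min p 1 ≤ ∑' j : ℕ, (1/4:ℝ)^j :=
      Summable.tsum_le_tsum (fun j => hdsum j)
        (Summable.of_nonneg_of_le (fun j => tsum_nonneg (fun i => by positivity))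
          hdsum hgeo) hgeo
    refine hb.trans ?_
    rw [tsum_geometric_of_lt_one (by norm_num) (by norm_num)]
    norm_num
  set G : (Fin n → ℝ) → ℝ≥0∞ := fun x => ∑' q' : ℕ × ℕ, (‖A q' * HH q' x‖₊ : ℝ≥0∞)
    with hGdef
  have hGmeas : Measurable G :=
    Measurable.ennreal_tsum (fun q' =>
      ((hdm q'.1 q'.2).const_mul (A q')).nnnorm.coe_nnreal_ennreal)
  set E : Set (Fin n → ℝ) := {x | G x ≠ ⊤} with hEdef
  have hEmeas : MeasurableSet E := by
    have : E = (G ⁻¹' {⊤})ᶜ := rfl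
    rw [this]
    exact (hGmeas (measurableSet_singleton _)).compl
  have hEsum : ∀ x ∈ E, Summable (fun q' : ℕ × ℕ => A q' * HH q' x) := by
    intro x hx
    exact (summable_iff_nntop _).2 hx
  have hEdiv : ∀ x, x ∉ E → ¬ Summable (fun q' : ℕ × ℕ => |A q' * HH q' x|) := by
    intro x hx hsum
    exact hx ((summable_iff_nntop _).1 (summable_abs_iff.1 hsum))
  set T : (Fin n → ℝ) → ℝ :=
    fun x => ∑' (m : ℕ), A (e.symm m) * E.indicator (HH (e.symm m)) x with hTdef
  have hTsum : ∀ x, HasSum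
      (fun m : ℕ => A (e.symm m) * E.indicator (HH (e.symm m)) x) (T x) := by
    intro x
    by_cases hx : x ∈ E
    · apply Summable.hasSum
      have h1 : Summable (fun q' : ℕ × ℕ => A q' * E.indicator (HH q') x) := by
        have heq : (fun q' : ℕ × ℕ => A q' * E.indicator (HH q') x)
            = fun q' => A q' * HH q' x :=
          funext fun q' => by rw [Set.indicator_of_mem hx]
        rw [heq]
        exact hEsum x hx
      have heqc : (fun m : ℕ => A (e.symm m) * E.indicator (HH (e.symm m)) x)
          = (fun q' : ℕ × ℕ => A q' * E.indicator (HH q') x) ∘ e.symm := rfl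
      rw [heqc]
      exact (Equiv.summable_iff (e := e.symm)
        (f := fun q' : ℕ × ℕ => A q' * E.indicator (HH q') x)).2 h1
    · have heq : (fun m : ℕ => A (e.symm m) * E.indicator (HH (e.symm m)) x)
          = fun _ => (0:ℝ) :=
        funext fun m => by rw [Set.indicator_of_notMem hx, mul_zero]
      rw [hTdef]
      simp only []
      rw [heq, tsum_zero]
      exact hasSum_zero
  set g : (Fin n → ℝ) → ℝ := fun x => f (κ 0) x + T x with hgdef
  have hdT : BHdecomp p s w T (fun m => A (e.symm m))
      (fun m => E.indicator (HH (e.symm m))) := by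
    refine ⟨fun m => isBlock_indicator ((hdd (e.symm m).1).1 (e.symm m).2) hEmeas,
      ?_, Filter.Eventually.of_forall hTsum⟩
    have heqc : (fun m : ℕ => |A (e.symm m)| ^ min p 1)
        = (fun q' : ℕ × ℕ => |A q'| ^ min p 1) ∘ e.symm := rfl
    rw [show (fun k : ℕ => |A (e.symm k)| ^ min p 1)
        = (fun q' : ℕ × ℕ => |A q'| ^ min p 1) ∘ e.symm from rfl]
    exact (Equiv.summable_iff (e := e.symm)
      (f := fun q' : ℕ × ℕ => |A q'| ^ min p 1)).2 hAsum
  have hmemg : MemBH p s w g := by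
    obtain ⟨lam0, h0, hd0⟩ := hf (κ 0)
    obtain ⟨lamg, hg', hdg, _⟩ := bhdecomp_add hd0 hdT
    exact ⟨lamg, hg', hdg⟩
  have hΩ : ∀ᵐ x ∂(volume : Measure (Fin n → ℝ)),
      ∀ j, HasSum (fun i => lamd j i * hd j i x) (f (κ (j+1)) x - f (κ j) x) :=
    MeasureTheory.ae_all_iff.2 fun j => (hdd j).2.2
  set Dm : ℕ → (Fin n → ℝ) → ℝ := fun j x =>
    (∑' i, ENNReal.ofReal (lamd j i * hd j i x)).toReal
      - (∑' i, ENNReal.ofReal (-(lamd j i * hd j i x))).toReal with hDmdef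
  have hDmmeas : ∀ j, Measurable (Dm j) := by
    intro j
    apply Measurable.sub
    · exact (Measurable.ennreal_tsum fun i =>
        ((hdm j i).const_mul _).ennreal_ofReal).ennreal_toReal
    · exact (Measurable.ennreal_tsum fun i =>
        ((hdm j i).const_mul _).neg.ennreal_ofReal).ennreal_toReal
  have hDmeq : ∀ j x, Summable (fun i => lamd j i * hd j i x) →
      Dm j x = ∑' i, lamd j i * hd j i x := by
    intro j x hsum
    rw [hDmdef]
    exact tsum_pos_neg hsum
  -- step C : decomposition of f (κ J) - g for every J
  have hJdec : ∀ J : ℕ, ∃ lam h,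
      BHdecomp p s w (fun x => f (κ J) x - g x) lam h ∧
      ∑' i, |lam i| ^ min p 1 ≤ 4 * (1/4:ℝ)^J := by
    intro J
    -- the tail part of the combined series, supported on E
    set c1 : ℕ → ℝ := fun m => if J ≤ (e.symm m).1 then -(A (e.symm m)) else 0
      with hc1def
    set B1 : ℕ → (Fin n → ℝ) → ℝ := fun m => E.indicator (HH (e.symm m)) with hB1def
    set t1 : (Fin n → ℝ) → ℝ := fun x => ∑' (m : ℕ), c1 m * B1 m x with ht1def
    have hc1apply : ∀ m : ℕ, |c1 m| ^ min p 1
        = if J ≤ (e.symm m).1 then |A (e.symm m)| ^ min p 1 else 0 := by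
      intro m
      by_cases h : J ≤ (e.symm m).1
      · simp [hc1def, h]
      · simp [hc1def, h, Real.zero_rpow hq']
    have hsum_ite : Summable
        (fun q' : ℕ × ℕ => if J ≤ q'.1 then |A q'| ^ min p 1 else 0) := by
      refine Summable.of_nonneg_of_le (fun q' => ?_) (fun q' => ?_) hAsum
      · split_ifs <;> positivity
      · split_ifs with h
        · exact le_rfl
        · positivity
    have hrows_ite : ∀ j : ℕ, Summable
        (fun i : ℕ => if J ≤ (j, i).1 then |A (j, i)| ^ min p 1 else 0) := by
      intro j
      by_cases h : J ≤ j
      · simpa [h] using (hdd j).2.1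
      · simpa [h] using (summable_zero : Summable fun _ : ℕ => (0:ℝ))
    have hc1sum : Summable (fun m : ℕ => |c1 m| ^ min p 1) := by
      rw [show (fun m : ℕ => |c1 m| ^ min p 1) = fun m =>
          (fun q' : ℕ × ℕ => if J ≤ q'.1 then |A q'| ^ min p 1 else 0) (e.symm m)
        from funext hc1apply]
      exact (Equiv.summable_iff (e := e.symm)
        (f := fun q' : ℕ × ℕ => if J ≤ q'.1 then |A q'| ^ min p 1 else 0)).2 hsum_ite
    -- bound for the tail coefficients
    have hσgeo : Summable (fun k : ℕ => (1/4:ℝ)^(k + J)) := by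
      have : (fun k : ℕ => (1/4:ℝ)^(k + J)) = fun k => (1/4:ℝ)^k * (1/4:ℝ)^J := by
        funext k; rw [pow_add]
      rw [this]; exact hgeo.mul_right _
    have hσsummable : Summable (fun k : ℕ => ∑' (i:ℕ), |lamd (k + J) i| ^ min p 1) :=
      Summable.of_nonneg_of_le (fun k => tsum_nonneg fun i => by positivity)
        (fun k => hdsum (k + J)) hσgeo
    have htailbound : ∑' (k : ℕ), (1/4:ℝ)^(k + J) ≤ 2 * (1/4:ℝ)^J := by
      have h1 : (fun k : ℕ => (1/4:ℝ)^(k + J)) = fun k => (1/4:ℝ)^k * (1/4:ℝ)^J := by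
        funext k; rw [pow_add]
      rw [h1, tsum_mul_right, tsum_geometric_of_lt_one (by norm_num) (by norm_num),
        show ((1:ℝ) - 1/4)⁻¹ = 4/3 by norm_num]
      have h2 : (0:ℝ) < (1/4:ℝ)^J := by positivity
      nlinarith
    have hshift : ∀ (σ : ℕ → ℝ), ∑' (j : ℕ), (if J ≤ j then σ j else 0)
        = ∑' (k : ℕ), σ (k + J) := by
      intro σ
      have hinj : Function.Injective (fun k : ℕ => k + J) := fun a b h => by
        simp only [] at h; omega
      have hsupp : Function.support (fun j : ℕ => if J ≤ j then σ j else 0)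
          ⊆ Set.range (fun k : ℕ => k + J) := by
        intro j hj
        simp only [Function.mem_support] at hj
        have hJj : J ≤ j := by
          by_contra hc
          exact hj (if_neg hc)
        exact ⟨j - J, by simp only []; omega⟩
      rw [← hinj.tsum_eq hsupp]
      exact tsum_congr fun k => if_pos (by omega : J ≤ k + J)
    have hc1bound : ∑' (m:ℕ), |c1 m| ^ min p 1 ≤ 2 * (1/4:ℝ)^J := by
      have e1 : ∑' (m:ℕ), |c1 m| ^ min p 1
          = ∑' (q' : ℕ × ℕ), (if J ≤ q'.1 then |A q'| ^ min p 1 else 0) := by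
        rw [tsum_congr hc1apply]
        exact Equiv.tsum_eq (e := e.symm)
          (f := fun q' : ℕ × ℕ => if J ≤ q'.1 then |A q'| ^ min p 1 else 0)
      have e2 : ∑' (q' : ℕ × ℕ), (if J ≤ q'.1 then |A q'| ^ min p 1 else 0)
          = ∑' (j : ℕ), ∑' (i : ℕ), (if J ≤ (j, i).1 then |A (j, i)| ^ min p 1 else 0) :=
        Summable.tsum_prod' hsum_ite hrows_ite
      have e3 : ∀ j : ℕ, ∑' (i : ℕ), (if J ≤ (j, i).1 then |A (j, i)| ^ min p 1 else 0)
          = if J ≤ j then ∑' (i:ℕ), |lamd j i| ^ min p 1 else 0 := by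
        intro j
        by_cases h : J ≤ j
        · simp only [if_pos h]; rfl
        · simp only [if_neg h, tsum_zero]
      rw [e1, e2, tsum_congr e3, hshift (fun j => ∑' (i:ℕ), |lamd j i| ^ min p 1)]
      exact le_trans (Summable.tsum_le_tsum (fun k => hdsum (k + J)) hσsummable hσgeo) htailbound
    -- the tail decomposition
    have hdc1 : BHdecomp p s w t1 c1 B1 := by
      refine ⟨?_, hc1sum, Filter.Eventually.of_forall fun x => ?_⟩
      · intro m
        exact isBlock_indicator ((hdd (e.symm m).1).1 (e.symm m).2) hEmeas
      · by_cases hx : x ∈ E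
        · apply Summable.hasSum
          have hFx : Summable (fun q' : ℕ × ℕ => |A q' * HH q' x|) := (hEsum x hx).abs
          have habs : Summable (fun m : ℕ => |c1 m * B1 m x|) := by
            refine Summable.of_nonneg_of_le (fun m => abs_nonneg _) (fun m => ?_)
              ((Equiv.summable_iff (e := e.symm)
                (f := fun q' : ℕ × ℕ => |A q' * HH q' x|)).2 hFx)
            show |c1 m * B1 m x| ≤ |A (e.symm m) * HH (e.symm m) x|
            rw [hc1def, hB1def]; simp only []
            rw [Set.indicator_of_mem hx]
            by_cases h : J ≤ (e.symm m).1
            · rw [if_pos h, neg_mul, abs_neg]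
            · rw [if_neg h, zero_mul, abs_zero]
              positivity
          exact summable_abs_iff.1 habs
        · have heq : (fun m : ℕ => c1 m * B1 m x) = fun _ => (0:ℝ) := by
            funext m
            rw [hB1def]; simp only []
            rw [Set.indicator_of_notMem hx, mul_zero]
          rw [ht1def]; simp only []
          rw [heq, tsum_zero]
          exact hasSum_zero
    -- the greedy part, supported on the complement of E
    set φJ : (Fin n → ℝ) → ℝ :=
      Set.indicator Eᶜ (fun x => ∑ j ∈ Finset.range J, Dm j x) with hφJdef
    have hφJmeas : Measurable φJ :=
      (Finset.measurable_sum _ (fun j _ => hDmmeas j)).indicator hEmeas.compl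
    have hφJdiv : ∀ x, φJ x ≠ 0 →
        ¬ Summable (fun m : ℕ => |A (e.symm m) * HH (e.symm m) x|) := by
      intro x hx hsum
      have hxE : x ∈ E := by
        by_contra hxE
        exact hEdiv x hxE ((Equiv.summable_iff (e := e.symm)
          (f := fun q' : ℕ × ℕ => |A q' * HH q' x|)).1 hsum)
      apply hx
      rw [hφJdef]
      exact Set.indicator_of_notMem (by simpa using hxE) _
    set θJ : ℝ := ((1/4:ℝ)^J) ^ (1 / min p 1) with hθJdef
    have hθJpos : 0 < θJ := Real.rpow_pos_of_pos (by positivity) _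
    obtain ⟨B2, hB2bl, hB2sum⟩ := greedy (p := p) (s := s) (w := w)
      (a := fun m => A (e.symm m)) (H := fun m => HH (e.symm m))
      (fun m => (hdd (e.symm m).1).1 (e.symm m).2)
      (fun m => hdm (e.symm m).1 (e.symm m).2) hφJmeas hφJdiv hθJpos
    have hθq : θJ ^ min p 1 = (1/4:ℝ)^J := by
      rw [hθJdef, ← Real.rpow_mul (by positivity), one_div_mul_cancel hq',
        Real.rpow_one]
    have hc2apply : ∀ m : ℕ, |θJ * A (e.symm m)| ^ min p 1
        = θJ ^ min p 1 * |A (e.symm m)| ^ min p 1 := by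
      intro m
      rw [abs_mul, Real.mul_rpow (abs_nonneg _) (abs_nonneg _), abs_of_pos hθJpos]
    have hc2sum : Summable (fun m : ℕ => |θJ * A (e.symm m)| ^ min p 1) := by
      rw [show (fun m : ℕ => |θJ * A (e.symm m)| ^ min p 1)
          = fun m => θJ ^ min p 1 * |A (e.symm m)| ^ min p 1 from funext hc2apply]
      exact ((Equiv.summable_iff (e := e.symm)
        (f := fun q' : ℕ × ℕ => |A q'| ^ min p 1)).2 hAsum).mul_left _
    have hc2bound : ∑' (m:ℕ), |θJ * A (e.symm m)| ^ min p 1 ≤ 2 * (1/4:ℝ)^J := by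
      rw [tsum_congr hc2apply, tsum_mul_left, hθq]
      have h1 : ∑' (m:ℕ), |A (e.symm m)| ^ min p 1
          = ∑' (q' : ℕ × ℕ), |A q'| ^ min p 1 :=
        Equiv.tsum_eq (e := e.symm) (f := fun q' : ℕ × ℕ => |A q'| ^ min p 1)
      rw [h1]
      have h2 : (0:ℝ) < (1/4:ℝ)^J := by positivity
      calc (1/4:ℝ)^J * ∑' (q' : ℕ × ℕ), |A q'| ^ min p 1
          ≤ (1/4:ℝ)^J * 2 := by
            exact mul_le_mul_of_nonneg_left hAtot h2.le
        _ = 2 * (1/4:ℝ)^J := by ring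
    have hdc2 : BHdecomp p s w φJ (fun m => θJ * A (e.symm m)) B2 :=
      ⟨hB2bl, hc2sum, Filter.Eventually.of_forall hB2sum⟩
    -- combine and identify with f (κ J) - g almost everywhere
    obtain ⟨lam, hcomb, hdcomb, hsumcomb⟩ := bhdecomp_add hdc1 hdc2
    have hae : ∀ᵐ x ∂(volume : Measure (Fin n → ℝ)),
        f (κ J) x - g x = t1 x + φJ x := by
      filter_upwards [hΩ] with x hx
      by_cases hxE : x ∈ E
      · -- on E
        have hFs : Summable (fun q' : ℕ × ℕ => A q' * HH q' x) := hEsum x hxE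
        have hFabs : Summable (fun q' : ℕ × ℕ => |A q' * HH q' x|) := hFs.abs
        have hFrow : ∀ j, Summable (fun i => A (j, i) * HH (j, i) x) :=
          fun j => (hx j).summable
        have hrow : ∀ j, ∑' (i:ℕ), A (j, i) * HH (j, i) x
            = f (κ (j+1)) x - f (κ j) x := fun j => (hx j).tsum_eq
        have hρ : Summable (fun j : ℕ => ∑' (i:ℕ), |A (j, i) * HH (j, i) x|) :=
          ((summable_prod_of_nonneg (fun _ => abs_nonneg _)).1 hFabs).2
        have hrowsum : Summable (fun j : ℕ => ∑' (i:ℕ), A (j, i) * HH (j, i) x) := by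
          apply summable_abs_iff.1
          refine Summable.of_nonneg_of_le (fun j => abs_nonneg _) (fun j => ?_) hρ
          have h1 : Summable (fun i : ℕ => ‖A (j, i) * HH (j, i) x‖) := by
            simpa only [Real.norm_eq_abs] using (hFrow j).abs
          have h2 := norm_tsum_le_tsum_norm h1
          simpa only [Real.norm_eq_abs] using h2
        have hTx : T x = ∑' (q' : ℕ × ℕ), A q' * HH q' x := by
          rw [hTdef]; simp only []
          rw [tsum_congr (fun m : ℕ => by
            rw [Set.indicator_of_mem hxE] :
              ∀ m : ℕ, A (e.symm m) * E.indicator (HH (e.symm m)) x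
                = A (e.symm m) * HH (e.symm m) x)]
          exact Equiv.tsum_eq (e := e.symm)
            (f := fun q' : ℕ × ℕ => A q' * HH q' x)
        have htot : ∑' (q' : ℕ × ℕ), A q' * HH q' x
            = ∑' (j:ℕ), ∑' (i:ℕ), A (j, i) * HH (j, i) x :=
          Summable.tsum_prod' hFs hFrow
        have hsplit := Summable.sum_add_tsum_nat_add (f := fun j : ℕ => ∑' (i:ℕ), A (j, i) * HH (j, i) x) J hrowsum
        have htel : ∑ j ∈ Finset.range J, (∑' (i:ℕ), A (j, i) * HH (j, i) x)
            = f (κ J) x - f (κ 0) x := by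
          rw [Finset.sum_congr rfl (fun j _ => hrow j)]
          exact Finset.sum_range_sub (fun j => f (κ j) x) J
        -- t1 x computation
        have ht1x : t1 x = -(∑' (k : ℕ), ∑' (i:ℕ), A (k + J, i) * HH (k + J, i) x) := by
          rw [ht1def]; simp only []
          have hterm : ∀ m : ℕ, c1 m * B1 m x
              = -(if J ≤ (e.symm m).1 then A (e.symm m) * HH (e.symm m) x else 0) := by
            intro m
            rw [hc1def, hB1def]; simp only []
            rw [Set.indicator_of_mem hxE]
            by_cases h : J ≤ (e.symm m).1
            · rw [if_pos h, if_pos h, neg_mul]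
            · rw [if_neg h, if_neg h, zero_mul, neg_zero]
          rw [tsum_congr hterm, tsum_neg]
          congr 1
          have e1 : ∑' (m:ℕ), (if J ≤ (e.symm m).1
                then A (e.symm m) * HH (e.symm m) x else 0)
              = ∑' (q' : ℕ × ℕ), (if J ≤ q'.1 then A q' * HH q' x else 0) :=
            Equiv.tsum_eq (e := e.symm)
              (f := fun q' : ℕ × ℕ => if J ≤ q'.1 then A q' * HH q' x else 0)
          have hsumite2 : Summable (fun q' : ℕ × ℕ =>
              if J ≤ q'.1 then A q' * HH q' x else 0) := by
            apply summable_abs_iff.1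
            refine Summable.of_nonneg_of_le (fun q' => abs_nonneg _)
              (fun q' => ?_) hFabs
            by_cases h : J ≤ q'.1
            · rw [if_pos h]
            · rw [if_neg h, abs_zero]; positivity
          have hrowsite2 : ∀ j : ℕ, Summable (fun i : ℕ =>
              if J ≤ (j, i).1 then A (j, i) * HH (j, i) x else 0) := by
            intro j
            by_cases h : J ≤ j
            · simpa [h] using hFrow j
            · simpa [h] using (summable_zero : Summable fun _ : ℕ => (0:ℝ))
          have e2 : ∑' (q' : ℕ × ℕ), (if J ≤ q'.1 then A q' * HH q' x else 0)
              = ∑' (j:ℕ), ∑' (i:ℕ), (if J ≤ (j, i).1 then A (j, i) * HH (j, i) x else 0) :=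
            Summable.tsum_prod' hsumite2 hrowsite2
          have e3 : ∀ j : ℕ, ∑' (i:ℕ), (if J ≤ (j, i).1 then A (j, i) * HH (j, i) x else 0)
              = if J ≤ j then ∑' (i:ℕ), A (j, i) * HH (j, i) x else 0 := by
            intro j
            by_cases h : J ≤ j
            · simp only [if_pos h]
            · simp only [if_neg h, tsum_zero]
          rw [e1, e2, tsum_congr e3,
            hshift (fun j => ∑' (i:ℕ), A (j, i) * HH (j, i) x)]
        -- φJ vanishes on E
        have hφJx : φJ x = 0 := by
          rw [hφJdef]
          exact Set.indicator_of_notMem (by simpa using hxE) _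
        -- put everything together
        rw [hgdef]; simp only []
        rw [hTx, htot, ht1x, hφJx]
        have : ∑' (j:ℕ), ∑' (i:ℕ), A (j, i) * HH (j, i) x
            = (f (κ J) x - f (κ 0) x)
              + ∑' (k : ℕ), ∑' (i:ℕ), A (k + J, i) * HH (k + J, i) x := by
          rw [← htel]
          exact hsplit.symm
        rw [this]
        ring
      · -- off E
        have hT0 : T x = 0 := by
          rw [hTdef]; simp only []
          rw [tsum_congr (fun m : ℕ => by
            rw [Set.indicator_of_notMem hxE, mul_zero] :
              ∀ m : ℕ, A (e.symm m) * E.indicator (HH (e.symm m)) x = 0), tsum_zero]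
        have ht1x : t1 x = 0 := by
          rw [ht1def]; simp only []
          rw [tsum_congr (fun m : ℕ => by
            rw [hB1def]; simp only []
            rw [Set.indicator_of_notMem hxE, mul_zero] :
              ∀ m : ℕ, c1 m * B1 m x = 0), tsum_zero]
        have hφJx : φJ x = ∑ j ∈ Finset.range J, Dm j x := by
          rw [hφJdef]
          exact Set.indicator_of_mem (by simpa using hxE) _
        have hDmx : ∀ j, Dm j x = f (κ (j+1)) x - f (κ j) x := by
          intro j
          rw [hDmeq j x (hx j).summable]
          exact (hx j).tsum_eq
        have htel : ∑ j ∈ Finset.range J, Dm j x = f (κ J) x - f (κ 0) x := by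
          rw [Finset.sum_congr rfl (fun j _ => hDmx j)]
          exact Finset.sum_range_sub (fun j => f (κ j) x) J
        rw [hgdef]; simp only []
        rw [hT0, ht1x, hφJx, htel]
        ring
    refine ⟨lam, hcomb, bhdecomp_congr hdcomb hae, ?_⟩
    rw [hsumcomb]
    calc (∑' (k:ℕ), |c1 k| ^ min p 1) + ∑' (k:ℕ), |θJ * A (e.symm k)| ^ min p 1
        ≤ 2 * (1/4:ℝ)^J + 2 * (1/4:ℝ)^J := add_le_add hc1bound hc2bound
      _ = 4 * (1/4:ℝ)^J := by ring
  -- step D : conclusion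
  refine ⟨g, hmemg, ?_⟩
  rw [Metric.tendsto_atTop]
  intro δ hδ
  have hδq : 0 < δ ^ min p 1 := Real.rpow_pos_of_pos hδ _
  obtain ⟨J, hJ⟩ := ((tendsto_pow_atTop_nhds_zero_of_lt_one
    (by norm_num : (0:ℝ) ≤ 1/4) (by norm_num : (1/4:ℝ) < 1)).eventually_lt_const
    (by positivity : (0:ℝ) < δ ^ min p 1 / 5)).exists
  refine ⟨κ J, fun k hk => ?_⟩
  have hbound : BHnorm p s w (fun x => f k x - g x)
      ≤ (5 * (1/4:ℝ)^J) ^ (1 / min p 1) := by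
    obtain ⟨lam1, h1, hd1, hsum1⟩ :=
      exists_decomp_le hp (memBH_sub (hf k) (hf (κ J))) (hdiffnorm J k hk) (hεpos J)
    rw [h2ε J] at hsum1
    obtain ⟨lamJ, hJ', hdJ, hsumJ⟩ := hJdec J
    obtain ⟨lam, h, hdsum', hs⟩ := bhdecomp_add hd1 hdJ
    have heq : (fun x => (f k x - f (κ J) x) + (f (κ J) x - g x))
        = fun x => f k x - g x := funext fun x => by ring
    rw [heq] at hdsum'
    refine (bhnorm_le hdsum').trans ?_
    apply Real.rpow_le_rpow (tsum_nonneg fun i => by positivity)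
    · rw [hs]; linarith
    · positivity
  rw [Real.dist_0_eq_abs, abs_of_nonneg (bhnorm_nonneg _)]
  refine hbound.trans_lt ?_
  have h5 : 5 * (1/4:ℝ)^J < δ ^ min p 1 := by
    have h4 : (0:ℝ) < (1/4:ℝ)^J := by positivity
    linarith
  calc (5 * (1/4:ℝ)^J) ^ (1 / min p 1) < (δ ^ min p 1) ^ (1 / min p 1) :=
        Real.rpow_lt_rpow (by positivity) h5 (by positivity)
    _ = δ := by
        rw [← Real.rpow_mul hδ.le, mul_one_div_cancel hq', Real.rpow_one]
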